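/- Variable-demand dissipation identity: for any f : K → ℝ with f k ≥ 0 for all k, any q : W → ℝ with q w ≥ 0, and any w ∈ W with Σ_{k : od k = w} f k = q w, one has Σ_{k : od k = w} c_k(f) · F_k(f, q) − u_w(q w) · G_w(f, q) = −q w · Σ_{k : od k = w} f k · (c_k(f) − u_w(q w))² ≤ 0; i.e., the derivative of the variable-demand BMW objective z(f, q) = Σ_a ∫_0^{x_a(f)} t_a(ω) dω − Σ_w ∫_0^{q w} u_w(ω) dω along the variable-demand dynamics is nonpositive, so z is a potential energy of the variable-demand dynamical system. -/
import Mathlib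


open Finset

/-- Link flow on arc `a` induced by route flows `f`. -/
noncomputable def linkFlow {A K : Type*} [Fintype K] (δ : A → K → ℝ)
    (f : K → ℝ) (a : A) : ℝ :=
  ∑ k, δ a k * f k

/-- Travel time on route `k` induced by route flows `f`. -/
noncomputable def routeTime {A K : Type*} [Fintype A] [Fintype K] (δ : A → K → ℝ)
    (t : A → ℝ → ℝ) (f : K → ℝ) (k : K) : ℝ :=
  ∑ a, t a (linkFlow δ f a) * δ a k

/-- O-D FIFO violation of route `k` at route-flow state `f`. -/
noncomputable def fifoViolation {A W K : Type*} [Fintype A] [Fintype K] [DecidableEq W]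
    (od : K → W) (δ : A → K → ℝ) (t : A → ℝ → ℝ) (f : K → ℝ) (k : K) : ℝ :=
  f k * ∑ j ∈ univ.filter (fun j => od j = od k),
    (routeTime δ t f k - routeTime δ t f j) * f j

/-- Right-hand side for route flows in the variable-demand dynamical system. -/
noncomputable def Fvar {A W K : Type*} [Fintype A] [Fintype K]
    (od : K → W) (δ : A → K → ℝ) (t : A → ℝ → ℝ) (u : W → ℝ → ℝ)
    (f : K → ℝ) (q : W → ℝ) (k : K) : ℝ :=
  -(q (od k) * f k * (routeTime δ t f k - u (od k) (q (od k))))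

/-- Right-hand side for demands in the variable-demand dynamical system. -/
noncomputable def Gvar {A W K : Type*} [Fintype A] [Fintype K] [DecidableEq W]
    (od : K → W) (δ : A → K → ℝ) (t : A → ℝ → ℝ) (u : W → ℝ → ℝ)
    (f : K → ℝ) (q : W → ℝ) (w : W) : ℝ :=
  -(q w * ((∑ k ∈ univ.filter (fun k => od k = w), f k * routeTime δ t f k)
      - q w * u w (q w)))

theorem variable_demand_dissipation {A W K : Type*} [Fintype A] [Fintype W] [Fintype K] [DecidableEq W]
    (od : K → W) (δ : A → K → ℝ) (hδ : ∀ a k, δ a k = 0 ∨ δ a k = 1)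
    (t : A → ℝ → ℝ)
    (u : W → ℝ → ℝ) (f : K → ℝ) (hf : ∀ k, 0 ≤ f k)
    (q : W → ℝ) (hq : ∀ w, 0 ≤ q w) (w : W)
    (hcons : ∑ k ∈ univ.filter (fun k => od k = w), f k = q w) :
    (∑ k ∈ univ.filter (fun k => od k = w), routeTime δ t f k * Fvar od δ t u f q k)
        - u w (q w) * Gvar od δ t u f q w =
      -(q w * ∑ k ∈ univ.filter (fun k => od k = w),
          f k * (routeTime δ t f k - u w (q w))^2) ∧
    (∑ k ∈ univ.filter (fun k => od k = w), routeTime δ t f k * Fvar od δ t u f q k)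
        - u w (q w) * Gvar od δ t u f q w ≤ 0 := by
  set S := univ.filter (fun k => od k = w) with hS
  set Q := q w with hQ
  set U := u w (q w) with hU
  set c := routeTime δ t f with hc
  have e1 : ∑ k ∈ S, c k * Fvar od δ t u f q k
      = Q * U * (∑ k ∈ S, f k * c k) - Q * (∑ k ∈ S, f k * c k * c k) := by
    rw [Finset.mul_sum, Finset.mul_sum, ← Finset.sum_sub_distrib]
    refine Finset.sum_congr rfl fun k hk => ?_
    have hk' : od k = w := (Finset.mem_filter.mp hk).2
    simp only [Fvar, hk', ← hc, ← hQ, ← hU]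
    ring
  have e4 : ∑ k ∈ S, f k * (c k - U)^2
      = (∑ k ∈ S, f k * c k * c k) - 2 * U * (∑ k ∈ S, f k * c k)
        + U^2 * (∑ k ∈ S, f k) := by
    rw [Finset.mul_sum, Finset.mul_sum, ← Finset.sum_sub_distrib, ← Finset.sum_add_distrib]
    refine Finset.sum_congr rfl fun k hk => ?_
    ring
  have eG : Gvar od δ t u f q w
      = -(Q * ((∑ k ∈ S, f k * c k) - Q * U)) := rfl
  have key : (∑ k ∈ S, c k * Fvar od δ t u f q k) - U * Gvar od δ t u f q w
      = -(Q * ∑ k ∈ S, f k * (c k - U)^2) := by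
    rw [e1, eG, e4]
    linear_combination (Q * U^2) * hcons
  refine ⟨key, ?_⟩
  rw [key]
  have hsum : 0 ≤ ∑ k ∈ S, f k * (c k - U)^2 :=
    Finset.sum_nonneg fun k _ => mul_nonneg (hf k) (sq_nonneg _)
  have := mul_nonneg (hq w) hsum
  linarith
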